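/- On R⁶ = T*R³ with canonical coordinates (x₁,x₂,x₃,p₁,p₂,p₃) and Poisson bracket {F,G} = Σ_i (∂F/∂p_i ∂G/∂x_i − ∂F/∂x_i ∂G/∂p_i), let H = p₁²+p₂²+p₃² + a₀(x₁²+x₂²+x₃²) + a₁/x₁² + a₂/x₂² + a₃/x₃² and F = (x₃p₁ − x₁p₃)² + x₃²·a₁/x₁² + x₁²·a₃/x₃². Then {H,F} = 0 on the open set where x₁,x₂,x₃ ≠ 0. -/

import Mathlib

open scoped BigOperators

/-- Phase space T*ℝ³ with points (x, p). -/
abbrev Phase : Type := (Fin 3 → ℝ) × (Fin 3 → ℝ)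

/-- Partial derivative in the position direction xᵢ. -/
noncomputable def pdx (i : Fin 3) (F : Phase → ℝ) : Phase → ℝ :=
  fun z => fderiv ℝ F z (Pi.single i 1, 0)

/-- Partial derivative in the momentum direction pᵢ. -/
noncomputable def pdp (i : Fin 3) (F : Phase → ℝ) : Phase → ℝ :=
  fun z => fderiv ℝ F z (0, Pi.single i 1)

/-- Canonical Poisson bracket on T*ℝ³. -/
noncomputable def poisson (F G : Phase → ℝ) : Phase → ℝ :=
  fun z => ∑ i, (pdp i F z * pdx i G z - pdx i F z * pdp i G z)

set_option maxHeartbeats 2000000 in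
/-- The SW I Hamiltonian Poisson-commutes with the integral
F⁽⁵⁾ = (x₃p₁ − x₁p₃)² + x₃²a₁/x₁² + x₁²a₃/x₃² where all xᵢ ≠ 0. -/
theorem stmt14 (a₀ a₁ a₂ a₃ : ℝ) (H F : Phase → ℝ)
    (hH : H = fun z => (z.2 0)^2 + (z.2 1)^2 + (z.2 2)^2
      + a₀ * ((z.1 0)^2 + (z.1 1)^2 + (z.1 2)^2)
      + a₁ / (z.1 0)^2 + a₂ / (z.1 1)^2 + a₃ / (z.1 2)^2)
    (hF : F = fun z => (z.1 2 * z.2 0 - z.1 0 * z.2 2)^2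
      + (z.1 2)^2 * a₁ / (z.1 0)^2 + (z.1 0)^2 * a₃ / (z.1 2)^2) :
    ∀ z : Phase, (∀ i, z.1 i ≠ 0) → poisson H F z = 0 := by
  subst hH hF
  intro z hz
  have hx : ∀ i : Fin 3, HasFDerivAt (fun w : Phase => w.1 i)
      ((ContinuousLinearMap.proj i).comp
        (ContinuousLinearMap.fst ℝ (Fin 3 → ℝ) (Fin 3 → ℝ))) z :=
    fun i => ((ContinuousLinearMap.proj i).comp
      (ContinuousLinearMap.fst ℝ (Fin 3 → ℝ) (Fin 3 → ℝ))).hasFDerivAt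
  have hp : ∀ i : Fin 3, HasFDerivAt (fun w : Phase => w.2 i)
      ((ContinuousLinearMap.proj i).comp
        (ContinuousLinearMap.snd ℝ (Fin 3 → ℝ) (Fin 3 → ℝ))) z :=
    fun i => ((ContinuousLinearMap.proj i).comp
      (ContinuousLinearMap.snd ℝ (Fin 3 → ℝ) (Fin 3 → ℝ))).hasFDerivAt
  have hsq : ∀ {f : Phase → ℝ} {f' : Phase →L[ℝ] ℝ}, HasFDerivAt f f' z →
      HasFDerivAt (fun w => f w ^ 2) (f z • f' + f z • f') z := fun h => by
    simp only [pow_two]; exact h.mul h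
  have hdiv : ∀ {f g : Phase → ℝ} {f' g' : Phase →L[ℝ] ℝ}, HasFDerivAt f f' z →
      HasFDerivAt g g' z → g z ≠ 0 →
      HasFDerivAt (fun w => f w / g w)
        (f z • ((-((g z)^2)⁻¹) • g') + (g z)⁻¹ • f') z := by
    intro f g f' g' hf hg hgz
    have h2 : HasFDerivAt (fun w => (g w)⁻¹) ((-((g z)^2)⁻¹) • g') z := by
      have hinv := (hasFDerivAt_inv hgz).comp z hg
      refine hinv.congr_fderiv ?_
      refine ContinuousLinearMap.ext fun w => ?_
      simp [ContinuousLinearMap.comp_apply, ContinuousLinearMap.smul_apply,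
        ContinuousLinearMap.smulRight_apply, ContinuousLinearMap.one_apply, smul_eq_mul]
      ring
    simp only [div_eq_mul_inv]; exact hf.mul h2
  have h0 : (z.1 0) ^ 2 ≠ 0 := pow_ne_zero _ (hz 0)
  have h1 : (z.1 1) ^ 2 ≠ 0 := pow_ne_zero _ (hz 1)
  have h2 : (z.1 2) ^ 2 ≠ 0 := pow_ne_zero _ (hz 2)
  have HD := (((((((hsq (hp 0)).add (hsq (hp 1))).add (hsq (hp 2))).add
      (((((hsq (hx 0)).add (hsq (hx 1))).add (hsq (hx 2)))).const_mul a₀)).add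
      (hdiv (hasFDerivAt_const a₁ z) (hsq (hx 0)) h0)).add
      (hdiv (hasFDerivAt_const a₂ z) (hsq (hx 1)) h1)).add
      (hdiv (hasFDerivAt_const a₃ z) (hsq (hx 2)) h2))
  have FD := ((hsq (((hx 2).mul (hp 0)).sub ((hx 0).mul (hp 2)))).add
      (hdiv ((hsq (hx 2)).mul_const a₁) (hsq (hx 0)) h0)).add
      (hdiv ((hsq (hx 0)).mul_const a₃) (hsq (hx 2)) h2)
  simp only [Pi.add_def, Pi.sub_def, Pi.mul_def] at HD FD
  simp only [poisson, pdx, pdp, HD.fderiv, FD.fderiv]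
  simp only [Fin.sum_univ_three, ContinuousLinearMap.add_apply,
    ContinuousLinearMap.sub_apply, ContinuousLinearMap.smul_apply,
    ContinuousLinearMap.comp_apply, ContinuousLinearMap.coe_fst',
    ContinuousLinearMap.coe_snd', ContinuousLinearMap.proj_apply,
    ContinuousLinearMap.zero_apply, smul_eq_mul, Pi.single_apply,
    Pi.zero_apply, Fin.isValue, show ((0:Fin 3) = 1) = False by decide,
    show ((0:Fin 3) = 2) = False by decide, show ((1:Fin 3) = 0) = False by decide,
    show ((1:Fin 3) = 2) = False by decide, show ((2:Fin 3) = 0) = False by decide,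
    show ((2:Fin 3) = 1) = False by decide, if_true, if_false, eq_self_iff_true]
  field_simp
  ring
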